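/- For bond percolation on the Cayley graph of a finitely generated amenable group G with finite symmetric generating set S, the mapping κ : [0,1)^S → (0,1], p ↦ κ(p) = 𝔼_p(|C_id|⁻¹), is continuous (where [0,1)^S carries the ℓ²-metric, and |C_id|⁻¹ := 0 when the cluster of the identity is infinite). -/

import Mathlib

open Set Filter MeasureTheory Pointwise

/-- One step of an active path within `Λ`. -/
def percStep {G : Type*} [Group G] (S : Finset G) (ω : G → G → Bool) (Λ : Set G)
    (a c : G) : Prop :=
  a ∈ Λ ∧ c ∈ Λ ∧ c * a⁻¹ ∈ S ∧ ω a (c * a⁻¹) = true ∧ ω c (a * c⁻¹) = true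

/-- The cluster `C_x^Λ(ω)` of `x` in the configuration `ω`. -/
def percCluster {G : Type*} [Group G] (S : Finset G) (ω : G → G → Bool) (Λ : Set G)
    (x : G) : Set G :=
  {y | Relation.ReflTransGen (percStep S ω Λ) x y}

open scoped Classical

section Aux
variable {G : Type*} [Group G] (S : Finset G)

def pball (n : ℕ) : Set G := (insert (1:G) (S : Set G)) ^ n

lemma pball_finite (n : ℕ) : (pball S n).Finite := by
  induction n with
  | zero => simp [pball]
  | succ k ih =>
      rw [pball, pow_succ]
      exact ih.mul (S.finite_toSet.insert 1)

lemma pball_subset_succ (n : ℕ) : pball S n ⊆ pball S (n+1) := by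
  intro x hx
  have : x * 1 ∈ pball S n * insert (1:G) (S : Set G) :=
    Set.mul_mem_mul hx (Set.mem_insert 1 _)
  simpa [pball, pow_succ] using this

lemma mem_pball_succ_of_step {n : ℕ} {a c : G} (ha : a ∈ pball S n) (hs : c * a⁻¹ ∈ S) :
    c ∈ pball S (n+1) := by
  have : (c * a⁻¹) * a ∈ insert (1:G) (S : Set G) * pball S n :=
    Set.mul_mem_mul (Set.mem_insert_of_mem _ hs) ha
  simpa [pball, pow_succ', inv_mul_cancel_right] using this

def reachN (ω : G → G → Bool) : ℕ → Set G
  | 0 => {1}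
  | k+1 => reachN ω k ∪ {c | ∃ a ∈ reachN ω k, percStep S ω Set.univ a c}

lemma reachN_mono (ω : G → G → Bool) {k m : ℕ} (h : k ≤ m) :
    reachN S ω k ⊆ reachN S ω m := by
  induction h with
  | refl => exact subset_rfl
  | step h ih => exact fun x hx => Or.inl (ih hx)
  -- note: might need different names

lemma reachN_subset_cluster (ω : G → G → Bool) (k : ℕ) :
    reachN S ω k ⊆ percCluster S ω Set.univ 1 := by
  induction k with
  | zero =>
      intro x hx
      rw [Set.mem_singleton_iff.mp hx]
      exact Relation.ReflTransGen.refl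
  | succ k ih =>
      rintro x (hx | ⟨a, ha, hstep⟩)
      · exact ih hx
      · exact Relation.ReflTransGen.tail (ih ha) hstep

lemma cluster_subset_of_fixed (ω : G → G → Bool) {k : ℕ}
    (hfix : reachN S ω (k+1) ⊆ reachN S ω k) :
    percCluster S ω Set.univ 1 ⊆ reachN S ω k := by
  intro y hy
  have hy' : Relation.ReflTransGen (percStep S ω Set.univ) 1 y := hy
  clear hy
  induction hy' with
  | refl => exact reachN_mono S ω (Nat.zero_le k) rfl
  | tail hb hbc ih => exact hfix (Or.inr ⟨_, ih, hbc⟩)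

lemma reachN_subset_pball (ω : G → G → Bool) (k : ℕ) :
    reachN S ω k ⊆ pball S k := by
  induction k with
  | zero =>
      intro x hx
      rw [Set.mem_singleton_iff.mp hx]
      simp [pball]
  | succ k ih =>
      rintro x (hx | ⟨a, ha, _, _, hs, _, _⟩)
      · exact pball_subset_succ S k (ih hx)
      · exact mem_pball_succ_of_step S (ih ha) hs

lemma cluster_subset_pball {ω : G → G → Bool} {n : ℕ}
    (hn : (percCluster S ω Set.univ 1).ncard = n+1) :
    percCluster S ω Set.univ 1 ⊆ pball S n := by
  have hfin : (percCluster S ω Set.univ 1).Finite := by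
    by_contra h
    rw [Set.Infinite.ncard h] at hn
    exact (Nat.succ_ne_zero n) hn.symm
  by_cases hex : ∃ k ≤ n, reachN S ω (k+1) ⊆ reachN S ω k
  · obtain ⟨k, hk, hfix⟩ := hex
    exact (cluster_subset_of_fixed S ω hfix).trans
      ((reachN_mono S ω hk).trans (reachN_subset_pball S ω n))
  · push_neg at hex
    exfalso
    have hstrict : ∀ k ≤ n, reachN S ω k ⊂ reachN S ω (k+1) := by
      intro k hk
      exact HasSubset.Subset.ssubset_of_not_subset
        (reachN_mono S ω (Nat.le_succ k)) (hex k hk)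
    have hcard : ∀ k, k ≤ n + 1 → k + 1 ≤ (reachN S ω k).ncard := by
      intro k
      induction k with
      | zero => intro _; simp [reachN]
      | succ k ih =>
          intro hk
          have h1 : k + 1 ≤ (reachN S ω k).ncard := ih (Nat.le_of_succ_le hk)
          have h2 : (reachN S ω k).ncard < (reachN S ω (k+1)).ncard :=
            Set.ncard_lt_ncard (hstrict k (Nat.succ_le_succ_iff.mp hk))
              (hfin.subset (reachN_subset_cluster S ω (k+1)))
          omega
    have h3 : (reachN S ω (n+1)).ncard ≤ (percCluster S ω Set.univ 1).ncard :=
      Set.ncard_le_ncard (reachN_subset_cluster S ω (n+1)) hfin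
    have h4 := hcard (n+1) le_rfl
    omega

lemma cluster_eq_of_agree (hsym : ∀ s ∈ S, s⁻¹ ∈ S) {ω ω' : G → G → Bool} {n : ℕ}
    (hagree : ∀ g ∈ pball S (n+1), ∀ s ∈ S, ω g s = ω' g s)
    (hn : (percCluster S ω Set.univ 1).ncard = n+1) :
    percCluster S ω' Set.univ 1 = percCluster S ω Set.univ 1 := by
  have hsub := cluster_subset_pball S hn
  apply Set.Subset.antisymm
  · -- cluster ω' ⊆ cluster ω
    intro y hy
    have hy' : Relation.ReflTransGen (percStep S ω' Set.univ) 1 y := hy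
    clear hy
    induction hy' with
    | refl => exact Relation.ReflTransGen.refl
    | @tail b c hb hbc ih =>
        obtain ⟨-, -, hs, h1, h2⟩ := hbc
        have hbball : b ∈ pball S (n+1) := pball_subset_succ S n (hsub ih)
        have hcball : c ∈ pball S (n+1) := mem_pball_succ_of_step S (hsub ih) hs
        refine Relation.ReflTransGen.tail ih ⟨trivial, trivial, hs, ?_, ?_⟩
        · rw [hagree b hbball _ hs]; exact h1
        · have hs' : b * c⁻¹ ∈ S := by
            have := hsym _ hs
            simpa [mul_inv_rev] using this
          rw [hagree c hcball _ hs']; exact h2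
  · -- cluster ω ⊆ cluster ω'
    intro y hy
    have hy' : Relation.ReflTransGen (percStep S ω Set.univ) 1 y := hy
    clear hy
    induction hy' with
    | refl => exact Relation.ReflTransGen.refl
    | @tail b c hb hbc ih =>
        obtain ⟨-, -, hs, h1, h2⟩ := hbc
        have hbmem : b ∈ percCluster S ω Set.univ 1 := hb
        have hbball : b ∈ pball S (n+1) := pball_subset_succ S n (hsub hbmem)
        have hcball : c ∈ pball S (n+1) := mem_pball_succ_of_step S (hsub hbmem) hs
        refine Relation.ReflTransGen.tail ih ⟨trivial, trivial, hs, ?_, ?_⟩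
        · rw [← hagree b hbball _ hs]; exact h1
        · have hs' : b * c⁻¹ ∈ S := by
            have := hsym _ hs
            simpa [mul_inv_rev] using this
          rw [← hagree c hcball _ hs']; exact h2

lemma ncard_local (hsym : ∀ s ∈ S, s⁻¹ ∈ S) {ω ω' : G → G → Bool} {n : ℕ}
    (hagree : ∀ g ∈ pball S (n+1), ∀ s ∈ S, ω g s = ω' g s) :
    (percCluster S ω Set.univ 1).ncard = n+1 ↔
      (percCluster S ω' Set.univ 1).ncard = n+1 := by
  constructor
  · intro h
    rw [cluster_eq_of_agree S hsym hagree h]; exact h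
  · intro h
    rw [cluster_eq_of_agree S hsym (fun g hg s hs => (hagree g hg s hs).symm) h]; exact h

end Aux

section Cyl
variable {G : Type*} [Group G] (S : Finset G)

noncomputable def Bfin (n : ℕ) : Finset G := (pball_finite S n).toFinset

lemma mem_Bfin {n : ℕ} {g : G} : g ∈ Bfin S n ↔ g ∈ pball S n :=
  Set.Finite.mem_toFinset _

noncomputable def extA (n : ℕ) (b : (↥(Bfin S (n+1)) × {x // x ∈ S}) → Bool) :
    G × {x // x ∈ S} → Bool :=
  fun q => if h : q.1 ∈ Bfin S (n+1) then b (⟨q.1, h⟩, q.2) else false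

noncomputable def extW (n : ℕ) (b : (↥(Bfin S (n+1)) × {x // x ∈ S}) → Bool) :
    G → G → Bool :=
  fun g s => if h : g ∈ Bfin S (n+1) ∧ s ∈ S then b (⟨g, h.1⟩, ⟨s, h.2⟩) else false

def cylF (n : ℕ) (b : (↥(Bfin S (n+1)) × {x // x ∈ S}) → Bool) : Set (G → G → Bool) :=
  {ω | ∀ q ∈ Bfin S (n+1) ×ˢ (Finset.univ : Finset {x // x ∈ S}), ω q.1 ↑q.2 = extA S n b q}

lemma cylF_agree {n : ℕ} {b : (↥(Bfin S (n+1)) × {x // x ∈ S}) → Bool}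
    {ω : G → G → Bool} (hω : ω ∈ cylF S n b) :
    ∀ g ∈ pball S (n+1), ∀ s ∈ S, ω g s = extW S n b g s := by
  intro g hg s hs
  have hg' : g ∈ Bfin S (n+1) := (mem_Bfin S).mpr hg
  have hq : (g, (⟨s, hs⟩ : {x // x ∈ S})) ∈
      Bfin S (n+1) ×ˢ (Finset.univ : Finset {x // x ∈ S}) := by
    simp [Finset.mem_product, hg']
  have := hω _ hq
  rw [this]
  simp only [extA, extW]
  rw [dif_pos hg', dif_pos ⟨hg', hs⟩]

lemma self_mem_cylF {n : ℕ} (ω : G → G → Bool) :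
    ω ∈ cylF S n (fun q => ω ↑q.1 ↑q.2) := by
  intro q hq
  have hq1 : q.1 ∈ Bfin S (n+1) := (Finset.mem_product.mp hq).1
  simp only [extA]
  rw [dif_pos hq1]

lemma cylF_disjoint {n : ℕ} : Pairwise (Function.onFun Disjoint (cylF S n)) := by
  intro b b' hne
  rw [Function.onFun_apply, Set.disjoint_left]
  intro ω hb hb'
  apply hne
  funext q
  have hq : ((q.1 : G), q.2) ∈ Bfin S (n+1) ×ˢ (Finset.univ : Finset {x // x ∈ S}) := by
    simp [Finset.mem_product]
  have h1 := hb _ hq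
  have h2 := hb' _ hq
  rw [h1] at h2
  simp only [extA] at h2
  rw [dif_pos q.1.2, dif_pos q.1.2] at h2
  simpa using h2

lemma cylF_measurable {n : ℕ} (b : (↥(Bfin S (n+1)) × {x // x ∈ S}) → Bool) :
    MeasurableSet (cylF S n b) := by
  have : cylF S n b = ⋂ q ∈ Bfin S (n+1) ×ˢ (Finset.univ : Finset {x // x ∈ S}),
      (fun ω : G → G → Bool => ω q.1 ↑q.2) ⁻¹' {extA S n b q} := by
    ext ω
    simp [cylF, Set.mem_iInter]
  rw [this]
  apply Finset.measurableSet_biInter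
  intro q _
  exact ((measurable_pi_apply (↑q.2 : G)).comp (measurable_pi_apply q.1))
    (measurableSet_singleton _)

/-- The event `|C_1| = n+1` is the finite disjoint union of the cylinders whose
extended representative configuration has this property. -/
lemma event_eq_biUnion (hsym : ∀ s ∈ S, s⁻¹ ∈ S) (n : ℕ) :
    {ω : G → G → Bool | (percCluster S ω Set.univ 1).ncard = n+1} =
      ⋃ b ∈ Finset.univ.filter
          (fun b => (percCluster S (extW S n b) Set.univ 1).ncard = n+1),
        cylF S n b := by
  ext ω
  simp only [Set.mem_setOf_eq, Set.mem_iUnion, Finset.mem_filter, Finset.mem_univ,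
    true_and, exists_prop]
  constructor
  · intro hA
    refine ⟨fun q => ω ↑q.1 ↑q.2, ?_, self_mem_cylF S ω⟩
    exact (ncard_local S hsym (cylF_agree S (self_mem_cylF S ω))).mp hA
  · rintro ⟨b, hb, hω⟩
    exact (ncard_local S hsym (cylF_agree S hω)).mpr hb

lemma event_measure (hsym : ∀ s ∈ S, s⁻¹ ∈ S) (n : ℕ) (μ : Measure (G → G → Bool)) :
    μ {ω : G → G → Bool | (percCluster S ω Set.univ 1).ncard = n+1} =
      ∑ b ∈ Finset.univ.filter
          (fun b => (percCluster S (extW S n b) Set.univ 1).ncard = n+1),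
        μ (cylF S n b) := by
  rw [event_eq_biUnion S hsym n]
  exact measure_biUnion_finset
    ((cylF_disjoint S).pairwiseDisjoint _ : Set.PairwiseDisjoint _ (cylF S n))
    (fun b _ => cylF_measurable S b)

lemma event_measurable (hsym : ∀ s ∈ S, s⁻¹ ∈ S) (n : ℕ) :
    MeasurableSet {ω : G → G → Bool | (percCluster S ω Set.univ 1).ncard = n+1} := by
  rw [event_eq_biUnion S hsym n]
  exact (Finset.measurableSet_biUnion _ (fun b _ => cylF_measurable S b))

end Cyl


set_option maxHeartbeats 2000000 in
/-- Continuity of `p ↦ κ(p) = 𝔼_p(|C_id|⁻¹) = Σ_{n≥1} (1/n) ℙ_p(|C_id| = n)` on `[0,1)^S`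
with the ℓ²-metric (Lemma 8.9). -/
theorem stmt_18 {G : Type*} [Group G] (S : Finset G)
    (hsym : ∀ s ∈ S, s⁻¹ ∈ S) (hgen : Subgroup.closure (S : Set G) = ⊤)
    -- amenability of G: existence of a Følner sequence
    (ham : ∃ F : ℕ → Set G, (∀ n, (F n).Finite ∧ (F n).Nonempty) ∧
      ∀ K : Set G, K.Finite → K.Nonempty →
        Tendsto (fun n => ((symmDiff (F n) (K * F n)).ncard : ℝ) / ((F n).ncard : ℝ))
          atTop (nhds 0))
    (P : EuclideanSpace ℝ {x // x ∈ S} → Measure (G → G → Bool))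
    (hprob : ∀ ppar : EuclideanSpace ℝ {x // x ∈ S}, (∀ s, 0 ≤ ppar s ∧ ppar s < 1) →
      IsProbabilityMeasure (P ppar))
    -- P p is the product Bernoulli measure with parameters p:
    (hcyl : ∀ ppar : EuclideanSpace ℝ {x // x ∈ S}, (∀ s, 0 ≤ ppar s ∧ ppar s < 1) →
      ∀ (E : Finset (G × {x // x ∈ S})) (a : G × {x // x ∈ S} → Bool),
        P ppar {ω | ∀ q ∈ E, ω q.1 ↑q.2 = a q} =
          ∏ q ∈ E, ENNReal.ofReal (if a q then ppar q.2 else 1 - ppar q.2)) :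
    ContinuousOn
      (fun ppar : EuclideanSpace ℝ {x // x ∈ S} =>
        ∑' n : ℕ, (1 / (n + 1 : ℝ)) *
          ((P ppar) {ω | (percCluster S ω Set.univ 1).ncard = n + 1}).toReal)
      {ppar : EuclideanSpace ℝ {x // x ∈ S} | ∀ s, 0 ≤ ppar s ∧ ppar s < 1} := by
  classical
  set Dom : Set (EuclideanSpace ℝ {x // x ∈ S}) :=
    {ppar | ∀ s, 0 ≤ ppar s ∧ ppar s < 1} with hDomdef
  set A : ℕ → Set (G → G → Bool) :=
    (fun n => {ω | (percCluster S ω Set.univ 1).ncard = n + 1}) with hAdef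
  set f : ℕ → EuclideanSpace ℝ {x // x ∈ S} → ℝ :=
    (fun n ppar => (1 / (n + 1 : ℝ)) * ((P ppar) (A n)).toReal) with hfdef
  show ContinuousOn (fun ppar => ∑' n : ℕ, f n ppar) Dom
  -- basic facts
  have hAdisj : Pairwise (Function.onFun Disjoint A) := by
    intro i j hij
    rw [Function.onFun_apply, Set.disjoint_left]
    intro ω hi hj
    have h1 : (percCluster S ω Set.univ 1).ncard = i + 1 := hi
    have h2 : (percCluster S ω Set.univ 1).ncard = j + 1 := hj
    omega
  have hAmeas : ∀ n, MeasurableSet (A n) := fun n => event_measurable S hsym n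
  -- per-point summability facts
  have hPle : ∀ p ∈ Dom, (∑' n, ((P p) (A n)).toReal ≤ 1) ∧
      Summable (fun n => ((P p) (A n)).toReal) := by
    intro p hp
    haveI := hprob p hp
    have hUle : ∑' n, (P p) (A n) ≤ 1 := by
      rw [← measure_iUnion hAdisj hAmeas]
      exact prob_le_one
    have hne : ∑' n, (P p) (A n) ≠ ⊤ :=
      (lt_of_le_of_lt hUle ENNReal.one_lt_top).ne
    have hsummable : Summable (fun n => ((P p) (A n)).toReal) :=
      ENNReal.summable_toReal hne
    refine ⟨?_, hsummable⟩
    have h1 : (∑' n, (P p) (A n)).toReal ≤ (1 : ENNReal).toReal :=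
      ENNReal.toReal_mono ENNReal.one_ne_top hUle
    rwa [ENNReal.tsum_toReal_eq (fun n => measure_ne_top _ _), ENNReal.toReal_one] at h1
  have hfnonneg : ∀ n p, 0 ≤ f n p := by
    intro n p
    apply mul_nonneg _ ENNReal.toReal_nonneg
    positivity
  have hfle : ∀ n p, f n p ≤ ((P p) (A n)).toReal := by
    intro n p
    rw [hfdef]
    simp only []
    have h1 : (1 / (n + 1 : ℝ)) ≤ 1 := by
      rw [div_le_one (by positivity)]
      have : (0:ℝ) ≤ n := Nat.cast_nonneg n
      linarith
    nlinarith [ENNReal.toReal_nonneg (a := (P p) (A n))]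
  have hfsummable : ∀ p ∈ Dom, Summable (fun n => f n p) := by
    intro p hp
    exact Summable.of_nonneg_of_le (fun n => hfnonneg n p) (fun n => hfle n p) (hPle p hp).2
  -- tail bound
  have htail : ∀ p ∈ Dom, ∀ N : ℕ, ∑' k, f (k + N) p ≤ 1 / (N + 1 : ℝ) := by
    intro p hp N
    obtain ⟨hle1, hsummable⟩ := hPle p hp
    have hshift : Summable (fun k => ((P p) (A (k + N))).toReal) :=
      (summable_nat_add_iff N).mpr hsummable
    have h1 : ∀ k, f (k + N) p ≤ (1 / (N + 1 : ℝ)) * ((P p) (A (k + N))).toReal := by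
      intro k
      apply mul_le_mul_of_nonneg_right _ ENNReal.toReal_nonneg
      apply one_div_le_one_div_of_le (by positivity)
      have : (N : ℝ) ≤ ((k + N : ℕ) : ℝ) := by
        exact_mod_cast Nat.le_add_left N k
      linarith
    calc ∑' k, f (k + N) p
        ≤ ∑' k, (1 / (N + 1 : ℝ)) * ((P p) (A (k + N))).toReal := by
          apply Summable.tsum_le_tsum h1 ((summable_nat_add_iff N).mpr (hfsummable p hp))
            (hshift.mul_left _)
      _ = (1 / (N + 1 : ℝ)) * ∑' k, ((P p) (A (k + N))).toReal := tsum_mul_left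
      _ ≤ (1 / (N + 1 : ℝ)) * 1 := by
          apply mul_le_mul_of_nonneg_left _ (by positivity)
          have hsplit := Summable.sum_add_tsum_nat_add (f := fun n => ((P p) (A n)).toReal) N hsummable
          have hpos : 0 ≤ ∑ i ∈ Finset.range N, ((P p) (A i)).toReal := by
            exact Finset.sum_nonneg (fun i _ => ENNReal.toReal_nonneg)
          linarith
      _ = 1 / (N + 1 : ℝ) := mul_one _
  -- continuity of each term on Dom
  have hterm : ∀ n, ContinuousOn (f n) Dom := by
    intro n
    set T := Finset.univ.filter
        (fun b : (↥(Bfin S (n+1)) × {x // x ∈ S}) → Bool =>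
          (percCluster S (extW S n b) Set.univ 1).ncard = n+1) with hTdef
    have hpolyc : Continuous (fun ppar : EuclideanSpace ℝ {x // x ∈ S} =>
        (1 / (n + 1 : ℝ)) * ∑ b ∈ T, ∏ q ∈ Bfin S (n+1) ×ˢ (Finset.univ : Finset {x // x ∈ S}),
          (if extA S n b q then ppar q.2 else 1 - ppar q.2)) := by
      apply Continuous.mul continuous_const
      apply continuous_finset_sum
      intro b _
      apply continuous_finset_prod
      intro q _
      have hev : Continuous (fun ppar : EuclideanSpace ℝ {x // x ∈ S} => ppar q.2) :=
        (EuclideanSpace.proj q.2).continuous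
      cases hb : extA S n b q
      · simp only [hb, Bool.false_eq_true, ↓reduceIte]
        exact continuous_const.sub hev
      · simpa [hb] using hev
    apply hpolyc.continuousOn.congr
    intro p hp
    have hp' : ∀ s, 0 ≤ p s ∧ p s < 1 := hp
    haveI := hprob p hp'
    have hcylval : ∀ b, ((P p) (cylF S n b)).toReal =
        ∏ q ∈ Bfin S (n+1) ×ˢ (Finset.univ : Finset {x // x ∈ S}),
          (if extA S n b q then p q.2 else 1 - p q.2) := by
      intro b
      have h1 : (P p) (cylF S n b) =
          ∏ q ∈ Bfin S (n+1) ×ˢ (Finset.univ : Finset {x // x ∈ S}),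
            ENNReal.ofReal (if extA S n b q then p q.2 else 1 - p q.2) :=
        hcyl p hp' _ (extA S n b)
      rw [h1, ENNReal.toReal_prod]
      apply Finset.prod_congr rfl
      intro q _
      rw [ENNReal.toReal_ofReal]
      cases hb : extA S n b q
      · have := (hp' q.2).2
        simp only [hb]
        norm_num
        linarith
      · simp only [hb]
        norm_num
        exact (hp' q.2).1
    show f n p = _
    rw [hfdef]
    simp only []
    rw [hAdef]
    simp only []
    rw [event_measure S hsym n (P p)]
    rw [ENNReal.toReal_sum (fun b _ => measure_ne_top _ _)]
    rw [← hTdef]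
    congr 1
    exact Finset.sum_congr rfl (fun b _ => hcylval b)
  -- uniform convergence of partial sums
  have hunif : TendstoUniformlyOn
      (fun N ppar => ∑ n ∈ Finset.range N, f n ppar)
      (fun ppar => ∑' n, f n ppar) atTop Dom := by
    rw [Metric.tendstoUniformlyOn_iff]
    intro ε hε
    obtain ⟨N₀, hN₀⟩ := exists_nat_one_div_lt hε
    filter_upwards [eventually_ge_atTop N₀] with N hN p hp
    have hsumm := hfsummable p hp
    have hsplit := Summable.sum_add_tsum_nat_add (f := fun n => f n p) N hsumm
    have htl := htail p hp N
    have htlnonneg : 0 ≤ ∑' k, f (k + N) p :=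
      tsum_nonneg (fun k => hfnonneg _ p)
    rw [Real.dist_eq]
    have hdiff : (∑' n, f n p) - ∑ n ∈ Finset.range N, f n p = ∑' k, f (k + N) p := by
      linarith
    rw [hdiff, abs_of_nonneg htlnonneg]
    have h2 : 1 / ((N:ℝ) + 1) ≤ 1 / ((N₀:ℝ) + 1) := by
      apply one_div_le_one_div_of_le (by positivity)
      exact_mod_cast Nat.succ_le_succ hN
    calc ∑' k, f (k + N) p ≤ 1 / ((N:ℝ) + 1) := htl
      _ ≤ 1 / ((N₀:ℝ) + 1) := h2
      _ < ε := hN₀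
  exact hunif.continuousOn
    (Filter.Eventually.of_forall (fun N =>
      continuousOn_finset_sum _ (fun n _ => hterm n))).frequently
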